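/- For any (n+1)×(n+1) matrix A over a commutative ring (or field), the Jacobi/Desnanot identity holds: det(A restricted to rows 1..n, columns 1..n) · det(A restricted to rows 2..n+1, columns 2..n+1) − det(A restricted to rows 2..n+1, columns 1..n) · det(A restricted to rows 1..n, columns 2..n+1) = det(A) · det(A restricted to rows 2..n, columns 2..n). -/

import Mathlib

open Matrix

private lemma jacobi_key {R : Type*} [CommRing R] (n : ℕ)
    (A : Matrix (Fin (n + 2)) (Fin (n + 2)) R) :
    A.det * ((A.submatrix Fin.castSucc Fin.castSucc).det * (A.submatrix Fin.succ Fin.succ).det -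
      (A.submatrix Fin.succ Fin.castSucc).det * (A.submatrix Fin.castSucc Fin.succ).det) =
    A.det * (A.det *
      (A.submatrix (fun i : Fin n => i.succ.castSucc) (fun j : Fin n => j.succ.castSucc)).det) := by
  set l : Fin (n + 2) := Fin.last (n + 1) with hl
  have hl0 : l ≠ 0 := by simp [hl, Fin.ext_iff]
  set B := adjugate A with hB
  set B' : Matrix (Fin (n + 2)) (Fin (n + 2)) R := Matrix.of fun i j =>
    if j = 0 then B i 0 else if j = l then B i l
      else (1 : Matrix (Fin (n + 2)) (Fin (n + 2)) R) i j with hB'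
  set U : Matrix (Fin (n + 2)) (Fin 2) R := Matrix.of fun i j =>
    if j = 0 then B i 0 - (1 : Matrix (Fin (n + 2)) (Fin (n + 2)) R) i 0
      else B i l - (1 : Matrix (Fin (n + 2)) (Fin (n + 2)) R) i l with hU
  set V : Matrix (Fin 2) (Fin (n + 2)) R := Matrix.of fun i j =>
    if i = 0 then (if j = 0 then (1 : R) else 0) else (if j = l then 1 else 0) with hV
  have hBUV : B' = 1 + U * V := by
    ext i j
    simp only [hB', hU, hV, Matrix.add_apply, Matrix.mul_apply, Fin.sum_univ_two,
      Matrix.of_apply]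
    rcases eq_or_ne j 0 with rfl | hj0
    · simp [hl0.symm]
    · rcases eq_or_ne j l with rfl | hjl
      · simp [hl0, hj0]
      · simp [hj0, hjl]
  have ha : B'.det = B 0 0 * B l l - B 0 l * B l 0 := by
    rw [hBUV, det_one_add_mul_comm, det_fin_two]
    simp only [Matrix.add_apply, Matrix.mul_apply, Matrix.of_apply, Matrix.one_apply, hU, hV]
    simp [Finset.mul_sum, ite_mul, mul_ite, hl0, hl0.symm]
  set C : Matrix (Fin (n + 2)) (Fin (n + 2)) R := Matrix.of fun i j =>
    if j = 0 then A.det * (if i = 0 then 1 else 0)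
      else if j = l then A.det * (if i = l then 1 else 0) else A i j with hC
  have hAB' : A * B' = C := by
    have hadj := Matrix.mul_adjugate A
    ext i j
    simp only [Matrix.mul_apply, hB', hC, Matrix.of_apply]
    rcases eq_or_ne j 0 with rfl | hj0
    · have := congrFun (congrFun hadj i) 0
      simp only [Matrix.mul_apply, Matrix.smul_apply, Matrix.one_apply, smul_eq_mul] at this
      simpa using this
    · rcases eq_or_ne j l with rfl | hjl
      · have := congrFun (congrFun hadj i) l
        simp only [Matrix.mul_apply, Matrix.smul_apply, Matrix.one_apply, smul_eq_mul] at this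
        simpa [hl0, hl0.symm, hB] using this
      · simp [hj0, hjl, Matrix.one_apply, mul_ite]
  have hcol0 : C.det = A.det * (C.submatrix Fin.succ Fin.succ).det := by
    rw [det_succ_column_zero, Finset.sum_eq_single 0]
    · simp [hC, Fin.succAbove_zero]
    · intro i _ hi
      simp [hC, hi]
    · simp
  set D := C.submatrix Fin.succ Fin.succ with hD
  have hcoll : D.det = A.det * (D.submatrix Fin.castSucc Fin.castSucc).det := by
    rw [det_succ_column D (Fin.last n), Finset.sum_eq_single (Fin.last n)]
    · have h2n : ((Fin.last n : Fin (n+1)) : ℕ) + ((Fin.last n : Fin (n+1)) : ℕ) = 2 * n := by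
        simp; ring
      simp [hD, hC, hl, Fin.succ_last, Fin.succAbove_last, h2n, pow_mul, Fin.succ_ne_zero]
    · intro i _ hi
      have h2 : (i.succ : Fin (n+2)) ≠ l := by
        rw [hl, ← Fin.succ_last]
        exact fun h => hi (Fin.succ_injective _ h)
      have hll : ((Fin.last n : Fin (n+1)).succ : Fin (n+2)) = l := by
        simp [hl, Fin.succ_last]
      simp [hD, hC, Fin.succ_ne_zero, hll, h2]
    · simp
  have hinner : D.submatrix Fin.castSucc Fin.castSucc =
      A.submatrix (fun i : Fin n => i.succ.castSucc) (fun j : Fin n => j.succ.castSucc) := by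
    ext i j
    have hj0 : ((j.castSucc).succ : Fin (n+2)) ≠ 0 := Fin.succ_ne_zero _
    have hjl : ((j.succ).castSucc : Fin (n+2)) ≠ l := by
      rw [hl]
      exact (Fin.castSucc_lt_last j.succ).ne
    simp [hD, hC, Fin.succ_castSucc, -Fin.castSucc_succ, Fin.succ_ne_zero, hjl, hl]
  -- adjugate entries as minors
  have e00 : B 0 0 = (A.submatrix Fin.succ Fin.succ).det := by
    rw [hB, adjugate_fin_succ_eq_det_submatrix]
    simp [Fin.succAbove_zero]
  have ell : B l l = (A.submatrix Fin.castSucc Fin.castSucc).det := by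
    rw [hB, adjugate_fin_succ_eq_det_submatrix]
    have h2n : ((l : Fin (n+2)) : ℕ) + ((l : Fin (n+2)) : ℕ) = 2 * (n + 1) := by
      simp [hl]; ring
    simp [h2n, pow_mul, Fin.succAbove_last, hl]
  have e0l : B 0 l = (-1 : R) ^ (n + 1) * (A.submatrix Fin.castSucc Fin.succ).det := by
    rw [hB, adjugate_fin_succ_eq_det_submatrix]
    simp [hl, Fin.succAbove_last, Fin.succAbove_zero]
  have el0 : B l 0 = (-1 : R) ^ (n + 1) * (A.submatrix Fin.succ Fin.castSucc).det := by
    rw [hB, adjugate_fin_succ_eq_det_submatrix]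
    simp [hl, Fin.succAbove_last, Fin.succAbove_zero]
  have hsq : ((-1 : R) ^ (n + 1)) * ((-1 : R) ^ (n + 1)) = 1 := by
    rw [← pow_add]
    exact Even.neg_one_pow ⟨n + 1, rfl⟩
  have main : A.det * B'.det = A.det * (A.det *
      (A.submatrix (fun i : Fin n => i.succ.castSucc) (fun j : Fin n => j.succ.castSucc)).det) := by
    rw [← det_mul, hAB', hcol0, hcoll, hinner]
  rw [ha, e00, ell, e0l, el0] at main
  linear_combination main + (A.det * (A.submatrix Fin.succ Fin.castSucc).det *
    (A.submatrix Fin.castSucc Fin.succ).det) * hsq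

/-- Jacobi/Desnanot identity for an (n+2)×(n+2) matrix over a commutative ring:
`A^{1..n+1}_{1..n+1} · A^{2..n+2}_{2..n+2} − A^{2..n+2}_{1..n+1} · A^{1..n+1}_{2..n+2}
  = det A · A^{2..n+1}_{2..n+1}`. -/
theorem jacobi_identity {R : Type*} [CommRing R] (n : ℕ)
    (A : Matrix (Fin (n + 2)) (Fin (n + 2)) R) :
    (A.submatrix Fin.castSucc Fin.castSucc).det * (A.submatrix Fin.succ Fin.succ).det -
      (A.submatrix Fin.succ Fin.castSucc).det * (A.submatrix Fin.castSucc Fin.succ).det =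
    A.det *
      (A.submatrix (fun i : Fin n => i.succ.castSucc) (fun j : Fin n => j.succ.castSucc)).det := by
  -- first prove it for the generic matrix over `ℤ[X i j]`, where `det` is cancellable
  set M : Matrix (Fin (n + 2)) (Fin (n + 2)) (MvPolynomial (Fin (n + 2) × Fin (n + 2)) ℤ) :=
    mvPolynomialX (Fin (n + 2)) (Fin (n + 2)) ℤ with hM
  have hMdet : M.det ≠ 0 := det_mvPolynomialX_ne_zero _ _
  have hgen := mul_left_cancel₀ hMdet (jacobi_key n M)
  -- transfer along the evaluation ring hom
  set φ : MvPolynomial (Fin (n + 2) × Fin (n + 2)) ℤ →+* R :=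
    MvPolynomial.eval₂Hom (Int.castRingHom R) (fun p => A p.1 p.2) with hφ
  have hmap : ∀ (k : ℕ) (e1 : Fin k → Fin (n + 2))
      (e2 : Fin k → Fin (n + 2)), φ ((M.submatrix e1 e2).det) = (A.submatrix e1 e2).det := by
    intro k e1 e2
    rw [RingHom.map_det]
    congr 1
    ext i j
    simp [hφ, hM, mvPolynomialX]
  have hmapA : φ M.det = A.det := by
    rw [RingHom.map_det]
    congr 1
    ext i j
    simp [hφ, hM, mvPolynomialX]
  have := congrArg φ hgen
  simp only [map_sub, _root_.map_mul] at this
  rw [hmap _ Fin.castSucc Fin.castSucc, hmap _ Fin.succ Fin.succ,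
    hmap _ Fin.succ Fin.castSucc, hmap _ Fin.castSucc Fin.succ, hmapA,
    hmap _ (fun i : Fin n => i.succ.castSucc) (fun j : Fin n => j.succ.castSucc)] at this
  exact this
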